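/- Let G be an abelian group and G₀ ⊆ G a non-half-factorial subset. Then there exist M ∈ ℕ and zero-sum sequences B_k ∈ B(G₀) for every k ∈ ℕ such that 2 ≤ |L(B_k)| ≤ M for all k, while min L(B_k) → ∞ as k → ∞. In particular, the elasticities ρ(L(B_k)) = max L(B_k)/min L(B_k) tend to 1 while |L(B_k)| ≥ 2. -/

import Mathlib

variable {G : Type*} [AddCommGroup G]

/-- `S` is a minimal zero-sum sequence over `G`. -/
def IsMinZS (S : Multiset G) : Prop :=
  S ≠ 0 ∧ S.sum = 0 ∧ ∀ T : Multiset G, T ≤ S → T ≠ 0 → T ≠ S → T.sum ≠ 0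

/-- `S` is a minimal zero-sum sequence with all terms in `G₀`, i.e. an atom of `𝓑(G₀)`. -/
def IsMinZSOn (G₀ : Set G) (S : Multiset G) : Prop :=
  (∀ x ∈ S, x ∈ G₀) ∧ IsMinZS S

/-- The set of factorization lengths of `S` into atoms of the monoid `𝓑(G₀)` of zero-sum
sequences over `G₀`. -/
def ZSLengthsOn (G₀ : Set G) (S : Multiset G) : Set ℕ :=
  {n | ∃ l : Multiset (Multiset G),
    Multiset.card l = n ∧ (∀ T ∈ l, IsMinZSOn G₀ T) ∧ l.sum = S}

/-- `G₀` is half-factorial: every zero-sum sequence over `G₀` has exactly one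
factorization length. -/
def HalfFactorialSet (G₀ : Set G) : Prop :=
  ∀ B : Multiset G, (∀ x ∈ B, x ∈ G₀) → B.sum = 0 → ∃ n, ZSLengthsOn G₀ B = {n}


set_option linter.unusedSectionVars false

-- helper: sum of nsmul
lemma msum_nsmul (n : ℕ) (S : Multiset G) : (n • S).sum = n • S.sum := by
  induction n with
  | zero => simp
  | succ n ih => rw [succ_nsmul, succ_nsmul, Multiset.sum_add, ih]

-- helper: card of sum of multisets
lemma mcard_sum (l : Multiset (Multiset G)) :
    Multiset.card l.sum = (l.map Multiset.card).sum := by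
  induction l using Multiset.induction with
  | empty => simp
  | cons T l ih => simp [ih]

-- existence of a factorization
lemma exists_fact (G₀ : Set G) (B : Multiset G) (hG : ∀ x ∈ B, x ∈ G₀) (hs : B.sum = 0) :
    ∃ l : Multiset (Multiset G), (∀ T ∈ l, IsMinZSOn G₀ T) ∧ l.sum = B := by
  induction B using Multiset.strongInductionOn with
  | ih B ih =>
  by_cases hB : B = 0
  · exact ⟨0, by simp, by simp [hB]⟩
  · have hex : ∃ n, ∃ T : Multiset G, T ≤ B ∧ T ≠ 0 ∧ T.sum = 0 ∧ Multiset.card T = n :=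
      ⟨Multiset.card B, B, le_refl _, hB, hs, rfl⟩
    classical
    obtain ⟨T, hTle, hT0, hTs, hTcard⟩ := Nat.find_spec hex
    have hTmin : IsMinZS T := by
      refine ⟨hT0, hTs, fun T' hle h0 hne hsum => ?_⟩
      have hlt : Multiset.card T' < Multiset.card T := Multiset.card_lt_card (lt_of_le_of_ne hle hne)
      exact Nat.find_min hex (by omega : Multiset.card T' < Nat.find hex)
        ⟨T', le_trans hle hTle, h0, hsum, rfl⟩
    have hBT : T + (B - T) = B := add_tsub_cancel_of_le hTle
    have hlt : B - T < B := by
      refine lt_of_le_of_ne (Multiset.sub_le_self _ _) fun hc => ?_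
      have := congrArg Multiset.card hBT
      rw [Multiset.card_add, hc] at this
      have : Multiset.card T = 0 := by omega
      exact hT0 (Multiset.card_eq_zero.mp this)
    have hsub : (B - T).sum = 0 := by
      have := congrArg Multiset.sum hBT
      rw [Multiset.sum_add, hTs, zero_add] at this
      rw [this, hs]
    obtain ⟨l, hl1, hl2⟩ := ih (B - T) hlt
      (fun x hx => hG x (Multiset.mem_of_le (Multiset.sub_le_self _ _) hx)) hsub
    exact ⟨T ::ₘ l, by
      intro U hU
      rcases Multiset.mem_cons.mp hU with h | h
      · exact h ▸ ⟨fun x hx => hG x (Multiset.mem_of_le hTle hx), hTmin⟩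
      · exact hl1 U h, by rw [Multiset.sum_cons, hl2, hBT]⟩

set_option linter.unusedSectionVars false

-- splitting a factorization along a multiset decomposition
lemma exists_split (l : Multiset (Multiset G)) (X Y : Multiset G) (h : l.sum = X + Y) :
    ∃ p : Multiset (Multiset G × Multiset G),
      p.map (fun q => q.1 + q.2) = l ∧ (p.map Prod.fst).sum = X ∧ (p.map Prod.snd).sum = Y := by
  classical
  induction l using Multiset.induction generalizing X Y with
  | empty =>
    simp only [Multiset.sum_zero] at h
    obtain ⟨hX, hY⟩ := add_eq_zero.mp h.symm
    exact ⟨0, by simp, by simp [hX], by simp [hY]⟩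
  | cons T l ih =>
    rw [Multiset.sum_cons] at h
    have hTle : T ≤ X + Y := h ▸ self_le_add_right T l.sum
    set S := T ∩ X with hS
    have hSX : S ≤ X := Multiset.inter_le_right ..
    have hST : S ≤ T := Multiset.inter_le_left ..
    set R := T - S with hR
    have hTSR : S + R = T := by rw [hR, add_comm]; exact tsub_add_cancel_of_le hST
    have hRY : R ≤ Y := by
      rw [Multiset.le_iff_count]
      intro g
      have hT : Multiset.count g T ≤ Multiset.count g X + Multiset.count g Y := by
        have := Multiset.count_le_of_le g hTle
        simpa [Multiset.count_add] using this
      simp only [hR, hS, Multiset.count_sub, Multiset.count_inter]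
      omega
    have hl : l.sum = (X - S) + (Y - R) := by
      ext g
      have h1 := congrArg (Multiset.count g) h
      simp only [Multiset.count_add, Multiset.count_sub] at h1 ⊢
      have h2 : Multiset.count g S = min (Multiset.count g T) (Multiset.count g X) := by
        rw [hS, Multiset.count_inter]
      have h3 : Multiset.count g R = Multiset.count g T - Multiset.count g S := by
        rw [hR, Multiset.count_sub]
      have h4 := Multiset.count_le_of_le g hSX
      have h5 := Multiset.count_le_of_le g hRY
      omega
    obtain ⟨p, hp1, hp2, hp3⟩ := ih (X - S) (Y - R) hl
    refine ⟨(S, R) ::ₘ p, ?_, ?_, ?_⟩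
    · rw [Multiset.map_cons, hp1, hTSR]
    · rw [Multiset.map_cons, Multiset.sum_cons, hp2]
      exact add_tsub_cancel_of_le hSX
    · rw [Multiset.map_cons, Multiset.sum_cons, hp3]
      exact add_tsub_cancel_of_le hRY

-- Dickson bound: minimal zero-sum sequences supported in a finite set have bounded size
lemma exists_bound (F : Finset G) :
    ∃ D : ℕ, ∀ T : Multiset G, IsMinZS T → (∀ x ∈ T, x ∈ F) → Multiset.card T ≤ D := by
  by_contra hc
  push_neg at hc
  -- build a sequence of atoms with strictly increasing card
  have hstep : ∀ n : ℕ, ∃ T : Multiset G, (IsMinZS T ∧ ∀ x ∈ T, x ∈ F) ∧ n < Multiset.card T := by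
    intro n
    obtain ⟨T, h1, h2, h3⟩ := hc n
    exact ⟨T, ⟨h1, h2⟩, h3⟩
  classical
  let f : ℕ → Multiset G := fun n => Nat.rec (Classical.choose (hstep 0))
    (fun _ prev => Classical.choose (hstep (Multiset.card prev))) n
  have hf : ∀ n, IsMinZS (f n) ∧ ∀ x ∈ f n, x ∈ F := by
    intro n
    cases n with
    | zero => exact (Classical.choose_spec (hstep 0)).1
    | succ m => exact (Classical.choose_spec (hstep (Multiset.card (f m)))).1
  have hmono : ∀ n, Multiset.card (f n) < Multiset.card (f (n + 1)) := by
    intro n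
    exact (Classical.choose_spec (hstep (Multiset.card (f n)))).2
  have hstrict : StrictMono fun n => Multiset.card (f n) := strictMono_nat_of_lt_succ hmono
  -- map into F → ℕ and apply Dickson's lemma
  let u : ℕ → (F → ℕ) := fun n g => Multiset.count (g : G) (f n)
  have hpwo : Set.IsPWO (Set.univ : Set ({x // x ∈ F} → ℕ)) :=
    Set.isPWO_univ_iff.mpr inferInstance
  obtain ⟨m, n, hmn, hle⟩ := hpwo.exists_lt (f := u) (fun _ => Set.mem_univ _)
  have hle' : f m ≤ f n := by
    rw [Multiset.le_iff_count]
    intro g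
    by_cases hg : g ∈ F
    · exact hle ⟨g, hg⟩
    · have : Multiset.count g (f m) = 0 := by
        rw [Multiset.count_eq_zero]
        exact fun hmem => hg ((hf m).2 g hmem)
      simp [this]
  have hne : f m ≠ f n := by
    intro hEq
    have := hstrict hmn
    simp only [hEq] at this
    exact lt_irrefl _ this
  exact (hf n).1.2.2 (f m) hle' (hf m).1.1 hne (hf m).1.2.1

-- key lemma: on a minimal supporting set, the minimal-cardinality zero-sum divides every zero-sum
lemma key_div (G₁ : Finset G)
    (FS : ∀ S : Multiset G, S ≠ 0 → S.sum = 0 → (∀ x ∈ S, x ∈ G₁) → ∀ g ∈ G₁, g ∈ S)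
    (A : Multiset G) (hA0 : A ≠ 0) (hAs : A.sum = 0) (hAG : ∀ x ∈ A, x ∈ G₁)
    (hAmin : ∀ S : Multiset G, S ≠ 0 → S.sum = 0 → (∀ x ∈ S, x ∈ G₁) → Multiset.card A ≤ Multiset.card S) :
    ∀ S : Multiset G, S ≠ 0 → S.sum = 0 → (∀ x ∈ S, x ∈ G₁) → A ≤ S := by
  intro S hS0 hSs hSG
  classical
  have hG₁ne : G₁.Nonempty := by
    obtain ⟨x, hx⟩ := Multiset.exists_mem_of_ne_zero hA0
    exact ⟨x, hAG x hx⟩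
  obtain ⟨g, hgG, hgmin⟩ :=
    G₁.exists_min_image (fun h => (Multiset.count h S : ℚ) / (Multiset.count h A : ℚ)) hG₁ne
  have hApos : ∀ h ∈ G₁, 0 < Multiset.count h A :=
    fun h hh => Multiset.count_pos.mpr (FS A hA0 hAs hAG h hh)
  have hSpos : ∀ h ∈ G₁, 0 < Multiset.count h S :=
    fun h hh => Multiset.count_pos.mpr (FS S hS0 hSs hSG h hh)
  set a := Multiset.count g A with ha
  set s := Multiset.count g S with hs
  have hble : s • A ≤ a • S := by
    rw [Multiset.le_iff_count]
    intro h
    rw [Multiset.count_nsmul, Multiset.count_nsmul]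
    by_cases hh : h ∈ G₁
    · have hmin := hgmin h hh
      have h1 : (0:ℚ) < (Multiset.count g A : ℚ) := by exact_mod_cast hApos g hgG
      have h2 : (0:ℚ) < (Multiset.count h A : ℚ) := by exact_mod_cast hApos h hh
      rw [div_le_div_iff₀ h1 h2] at hmin
      have : (s * Multiset.count h A : ℚ) ≤ (a * Multiset.count h S : ℚ) := by
        push_cast
        nlinarith [hmin]
      exact_mod_cast this
    · have hz : Multiset.count h A = 0 := by
        rw [Multiset.count_eq_zero]
        exact fun hmem => hh (hAG h hmem)
      simp [hz]
  set Z := a • S - s • A with hZ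
  have hZadd : s • A + Z = a • S := add_tsub_cancel_of_le hble
  have hZsum : Z.sum = 0 := by
    have := congrArg Multiset.sum hZadd
    rw [Multiset.sum_add, msum_nsmul, msum_nsmul, hAs, hSs, smul_zero, smul_zero, zero_add] at this
    exact this
  have hZg : g ∉ Z := by
    have hcz : Multiset.count g Z = 0 := by
      rw [hZ, Multiset.count_sub, Multiset.count_nsmul, Multiset.count_nsmul, ← ha, ← hs,
        mul_comm]
      omega
    exact fun hc => (Multiset.count_pos.mpr hc).ne' hcz
  have hZ0 : Z = 0 := by
    by_contra hc
    have hmem : ∀ x ∈ Z, x ∈ G₁ := by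
      intro x hx
      have hxS : x ∈ a • S := Multiset.mem_of_le (Multiset.sub_le_self _ _) hx
      exact hSG x (Multiset.mem_of_mem_nsmul hxS)
    exact hZg (FS Z hc hZsum hmem g hgG)
  have hEq : a • S = s • A := by
    have := tsub_eq_zero_iff_le.mp (hZ ▸ hZ0)
    exact le_antisymm this hble
  have hapos := hApos g hgG
  have hspos := hSpos g hgG
  by_cases hsa : a ≤ s
  · rw [Multiset.le_iff_count]
    intro h
    have hc := congrArg (Multiset.count h) hEq
    rw [Multiset.count_nsmul, Multiset.count_nsmul] at hc
    nlinarith [hc, hsa, hapos]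
  · exfalso
    push_neg at hsa
    have hcard := congrArg Multiset.card hEq
    rw [Multiset.card_nsmul, Multiset.card_nsmul] at hcard
    have hAcard : Multiset.card A ≤ Multiset.card S := hAmin S hS0 hSs hSG
    have hA1 : 0 < Multiset.card A := Multiset.card_pos.mpr hA0
    nlinarith [hcard, hsa, hAcard, hA1]

-- the central length bound
lemma length_bound [DecidableEq G] (G₀ : Set G) (G₁ : Finset G) (A B₀ : Multiset G) (D : ℕ)
    (hA0 : A ≠ 0) (hAG1 : ∀ x ∈ A, x ∈ G₁)
    (huniq : ∀ T : Multiset G, IsMinZS T → (∀ x ∈ T, x ∈ G₁) → T = A)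
    (hD : ∀ T : Multiset G, IsMinZS T → (∀ x ∈ T, x ∈ A.toFinset ∪ B₀.toFinset) →
      Multiset.card T ≤ D)
    (k n : ℕ) (hn : n ∈ ZSLengthsOn G₀ (k • A + B₀)) :
    k ≤ n + Multiset.card B₀ * D ∧ n ≤ k + Multiset.card B₀ := by
  classical
  obtain ⟨l, hlcard, hlatom, hlsum⟩ := hn
  obtain ⟨p, hp, hpX, hpY⟩ := exists_split l (k • A) B₀ hlsum
  set pp := p.filter (fun q => q.2 = 0) with hpp
  set pt := p.filter (fun q => ¬ q.2 = 0) with hpt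
  have hsplitp : pp + pt = p := Multiset.filter_add_not _ p
  set n₁ := Multiset.card pp with hn₁
  set n₂ := Multiset.card pt with hn₂
  have hcardp : n₁ + n₂ = n := by
    have h1 := congrArg Multiset.card hsplitp
    have h2 := congrArg Multiset.card hp
    rw [Multiset.card_map] at h2
    rw [Multiset.card_add] at h1
    omega
  -- each element of l is an atom contained in k•A + B₀
  have hlatom' : ∀ q ∈ p, IsMinZSOn G₀ (q.1 + q.2) := by
    intro q hq
    apply hlatom
    rw [← hp]
    exact Multiset.mem_map_of_mem _ hq
  have hfstle : ∀ q ∈ p, q.1 ≤ k • A := by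
    intro q hq
    rw [← hpX]
    exact Multiset.le_sum_of_mem (Multiset.mem_map_of_mem _ hq)
  -- pure atoms equal A
  have hpure : ∀ q ∈ pp, q.1 = A := by
    intro q hq
    rw [hpp, Multiset.mem_filter] at hq
    obtain ⟨hqp, hq2⟩ := hq
    have hatom := hlatom' q hqp
    rw [hq2, add_zero] at hatom
    refine huniq q.1 hatom.2 fun x hx => ?_
    have : x ∈ k • A := Multiset.mem_of_le (hfstle q hqp) hx
    exact hAG1 x (Multiset.mem_of_mem_nsmul this)
  -- sum of pure firsts is n₁ • A
  have hppsum : (pp.map Prod.fst).sum = n₁ • A := by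
    have : pp.map Prod.fst = Multiset.replicate n₁ A := by
      rw [Multiset.eq_replicate]
      constructor
      · rw [Multiset.card_map]
      · intro b hb
        obtain ⟨q, hq, rfl⟩ := Multiset.mem_map.mp hb
        exact hpure q hq
    rw [this, Multiset.sum_replicate]
  -- decomposition of k • A
  have hXdec : k • A = n₁ • A + (pt.map Prod.fst).sum := by
    rw [← hpX, ← hsplitp, Multiset.map_add, Multiset.sum_add, hppsum]
  -- cardinalities
  have hcardX : k * Multiset.card A
      = n₁ * Multiset.card A + Multiset.card (pt.map Prod.fst).sum := by
    have := congrArg Multiset.card hXdec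
    rwa [Multiset.card_add, Multiset.card_nsmul, Multiset.card_nsmul] at this
  -- bound on touching firsts
  have hWle : Multiset.card (pt.map Prod.fst).sum ≤ n₂ * D := by
    rw [mcard_sum, Multiset.map_map]
    have hb : ∀ x ∈ pt.map (Multiset.card ∘ Prod.fst), x ≤ D := by
      intro x hx
      obtain ⟨q, hq, rfl⟩ := Multiset.mem_map.mp hx
      have hqp : q ∈ p := Multiset.mem_of_le (Multiset.filter_le _ p) hq
      have hatom := hlatom' q hqp
      have hTmem : q.1 + q.2 ≤ k • A + B₀ := by
        rw [← hlsum, ← hp]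
        exact Multiset.le_sum_of_mem (Multiset.mem_map_of_mem (fun q : Multiset G × Multiset G => q.1 + q.2) hqp)
      have hTF : ∀ x ∈ q.1 + q.2, x ∈ A.toFinset ∪ B₀.toFinset := by
        intro x hx
        have := Multiset.mem_of_le hTmem hx
        rw [Multiset.mem_add] at this
        rcases this with h | h
        · exact Finset.mem_union_left _ (Multiset.mem_toFinset.mpr (Multiset.mem_of_mem_nsmul h))
        · exact Finset.mem_union_right _ (Multiset.mem_toFinset.mpr h)
      have hcardT := hD (q.1 + q.2) hatom.2 hTF
      have : Multiset.card q.1 ≤ Multiset.card (q.1 + q.2) := by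
        rw [Multiset.card_add]; omega
      simp only [Function.comp_apply]
      omega
    calc (pt.map (Multiset.card ∘ Prod.fst)).sum
        ≤ Multiset.card (pt.map (Multiset.card ∘ Prod.fst)) • D :=
          Multiset.sum_le_card_nsmul _ _ hb
      _ = n₂ * D := by rw [Multiset.card_map, smul_eq_mul]
  -- n₂ ≤ card B₀
  have hn₂le : n₂ ≤ Multiset.card B₀ := by
    have h1 : Multiset.card B₀ = (p.map (Multiset.card ∘ Prod.snd)).sum := by
      rw [← hpY, mcard_sum, Multiset.map_map]
    have h2le : pt.map (Multiset.card ∘ Prod.snd) ≤ p.map (Multiset.card ∘ Prod.snd) :=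
      Multiset.map_le_map (Multiset.filter_le _ p)
    obtain ⟨u, hu⟩ := Multiset.le_iff_exists_add.mp h2le
    have h2 : (pt.map (Multiset.card ∘ Prod.snd)).sum ≤ (p.map (Multiset.card ∘ Prod.snd)).sum := by
      rw [hu, Multiset.sum_add]
      exact Nat.le_add_right _ _
    have h3 : n₂ • 1 ≤ (pt.map (Multiset.card ∘ Prod.snd)).sum := by
      have : n₂ = Multiset.card (pt.map (Multiset.card ∘ Prod.snd)) := by
        rw [Multiset.card_map]
      rw [this]
      apply Multiset.card_nsmul_le_sum
      intro x hx
      obtain ⟨q, hq, rfl⟩ := Multiset.mem_map.mp hx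
      rw [hpt, Multiset.mem_filter] at hq
      simp only [Function.comp_apply]
      have : q.2 ≠ 0 := hq.2
      have := Multiset.card_pos.mpr this
      omega
    simp only [smul_eq_mul, mul_one] at h3
    omega
  -- put everything together
  have hA1 : 0 < Multiset.card A := Multiset.card_pos.mpr hA0
  have hn₁k : n₁ ≤ k := by
    by_contra hc
    push_neg at hc
    have : k * Multiset.card A < n₁ * Multiset.card A := by
      exact Nat.mul_lt_mul_of_lt_of_le hc (le_refl _) hA1
    omega
  set w := Multiset.card (pt.map Prod.fst).sum with hw
  have hsub : (k - n₁) * Multiset.card A = w := by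
    rw [Nat.sub_mul]
    omega
  have hkn₁ : k - n₁ ≤ w := by
    calc k - n₁ = (k - n₁) * 1 := (mul_one _).symm
      _ ≤ (k - n₁) * Multiset.card A := Nat.mul_le_mul_left _ hA1
      _ = w := hsub
  have hwle : w ≤ Multiset.card B₀ * D :=
    le_trans hWle (Nat.mul_le_mul_right _ hn₂le)
  omega

/-- If `G₀ ⊆ G` is not half-factorial, then there exist `M ∈ ℕ` and zero-sum sequences
`B_k` over `G₀` (for `k ∈ ℕ`) such that `2 ≤ |L(B_k)| ≤ M` for all `k`, while
`min L(B_k) → ∞` as `k → ∞`. -/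
theorem stmt6 (G₀ : Set G) (h : ¬ HalfFactorialSet G₀) :
    ∃ (M : ℕ) (B : ℕ → Multiset G),
      (∀ k, (∀ x ∈ B k, x ∈ G₀) ∧ (B k).sum = 0 ∧
        2 ≤ (ZSLengthsOn G₀ (B k)).ncard ∧ (ZSLengthsOn G₀ (B k)).ncard ≤ M) ∧
      Filter.Tendsto (fun k => sInf (ZSLengthsOn G₀ (B k))) Filter.atTop Filter.atTop := by
  classical
  rw [HalfFactorialSet] at h
  push_neg at h
  obtain ⟨B₀, hB₀G, hB₀s, hB₀L⟩ := h
  obtain ⟨l₀, hl₀a, hl₀s⟩ := exists_fact G₀ B₀ hB₀G hB₀s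
  set ℓ₁ := Multiset.card l₀ with hℓ₁
  have hℓ₁mem : ℓ₁ ∈ ZSLengthsOn G₀ B₀ := ⟨l₀, rfl, hl₀a, hl₀s⟩
  obtain ⟨ℓ₂, hℓ₂mem, hℓne⟩ : ∃ m ∈ ZSLengthsOn G₀ B₀, m ≠ ℓ₁ := by
    by_contra hc
    push_neg at hc
    exact hB₀L ℓ₁ (Set.eq_singleton_iff_unique_mem.mpr ⟨hℓ₁mem, hc⟩)
  have hzero : ∀ n ∈ ZSLengthsOn G₀ (0 : Multiset G), n = 0 := by
    rintro n ⟨l, hcard, hatoms, hsum⟩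
    by_contra hn
    have hl0 : l ≠ 0 := by
      intro hc
      rw [hc] at hcard
      simp at hcard
      omega
    obtain ⟨T, hT⟩ := Multiset.exists_mem_of_ne_zero hl0
    have : T ≤ l.sum := Multiset.le_sum_of_mem hT
    rw [hsum] at this
    exact (hatoms T hT).2.1 (Multiset.le_zero.mp this)
  have hB₀ne : B₀ ≠ 0 := by
    rintro rfl
    have h1 := hzero ℓ₁ hℓ₁mem
    have h2 := hzero ℓ₂ hℓ₂mem
    omega
  -- minimal supporting subset G₁ of the support of B₀
  have hPmem : B₀.toFinset ∈ B₀.toFinset.powerset.filter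
      (fun F => ∃ S : Multiset G, S ≠ 0 ∧ S.sum = 0 ∧ ∀ x ∈ S, x ∈ F) := by
    rw [Finset.mem_filter]
    exact ⟨Finset.mem_powerset_self _, B₀, hB₀ne, hB₀s, fun x hx => Multiset.mem_toFinset.mpr hx⟩
  obtain ⟨G₁, hG₁mem, hG₁min⟩ := Finset.exists_min_image
    (B₀.toFinset.powerset.filter
      (fun F => ∃ S : Multiset G, S ≠ 0 ∧ S.sum = 0 ∧ ∀ x ∈ S, x ∈ F))
    Finset.card ⟨_, hPmem⟩
  rw [Finset.mem_filter, Finset.mem_powerset] at hG₁mem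
  obtain ⟨hG₁sub, S₀, hS₀0, hS₀s, hS₀G⟩ := hG₁mem
  -- full support property
  have FS : ∀ S : Multiset G, S ≠ 0 → S.sum = 0 → (∀ x ∈ S, x ∈ G₁) → ∀ g ∈ G₁, g ∈ S := by
    intro S h0 hs hG g hg
    have hsub : S.toFinset ⊆ G₁ := fun x hx => hG x (Multiset.mem_toFinset.mp hx)
    have hmem : S.toFinset ∈ B₀.toFinset.powerset.filter
        (fun F => ∃ S : Multiset G, S ≠ 0 ∧ S.sum = 0 ∧ ∀ x ∈ S, x ∈ F) := by
      rw [Finset.mem_filter, Finset.mem_powerset]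
      exact ⟨hsub.trans hG₁sub, S, h0, hs, fun x hx => Multiset.mem_toFinset.mpr hx⟩
    have hcard := hG₁min _ hmem
    have heq : S.toFinset = G₁ := Finset.eq_of_subset_of_card_le hsub hcard
    rw [← heq] at hg
    exact Multiset.mem_toFinset.mp hg
  -- minimal-cardinality zero-sum over G₁
  have hTSne : {m | ∃ S : Multiset G, S ≠ 0 ∧ S.sum = 0 ∧ (∀ x ∈ S, x ∈ G₁) ∧
      Multiset.card S = m}.Nonempty := ⟨Multiset.card S₀, S₀, hS₀0, hS₀s, hS₀G, rfl⟩
  obtain ⟨A, hA0, hAs, hAG1, hAcard⟩ := Nat.sInf_mem hTSne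
  have hAmin : ∀ S : Multiset G, S ≠ 0 → S.sum = 0 → (∀ x ∈ S, x ∈ G₁) →
      Multiset.card A ≤ Multiset.card S := by
    intro S h0 hs hG
    rw [hAcard]
    exact Nat.sInf_le ⟨S, h0, hs, hG, rfl⟩
  have hdiv := key_div G₁ FS A hA0 hAs hAG1 hAmin
  have huniq : ∀ T : Multiset G, IsMinZS T → (∀ x ∈ T, x ∈ G₁) → T = A := by
    intro T hT hTG
    have hle := hdiv T hT.1 hT.2.1 hTG
    by_contra hne
    exact hT.2.2 A hle hA0 (Ne.symm hne) hAs
  have hG₁G₀ : ∀ x ∈ G₁, x ∈ G₀ := fun x hx => hB₀G x (Multiset.mem_toFinset.mp (hG₁sub hx))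
  have hAatom : IsMinZSOn G₀ A := by
    refine ⟨fun x hx => hG₁G₀ x (hAG1 x hx), hA0, hAs, fun T hle h0 hne hsum => ?_⟩
    have hTG : ∀ x ∈ T, x ∈ G₁ := fun x hx => hAG1 x (Multiset.mem_of_le hle hx)
    exact hne (le_antisymm hle (hdiv T h0 hsum hTG))
  obtain ⟨D, hD⟩ := exists_bound (A.toFinset ∪ B₀.toFinset)
  set c := Multiset.card B₀ * D with hc
  -- common facts about B k := k • A + B₀
  have hmemG : ∀ k : ℕ, ∀ x ∈ k • A + B₀, x ∈ G₀ := by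
    intro k x hx
    rw [Multiset.mem_add] at hx
    rcases hx with h | h
    · exact hG₁G₀ x (hAG1 x (Multiset.mem_of_mem_nsmul h))
    · exact hB₀G x h
  have hsum : ∀ k, ((k : ℕ) • A + B₀).sum = 0 := by
    intro k
    rw [Multiset.sum_add, msum_nsmul, hAs, smul_zero, hB₀s, add_zero]
  have hshift : ∀ k : ℕ, ∀ ℓ ∈ ZSLengthsOn G₀ B₀, k + ℓ ∈ ZSLengthsOn G₀ (k • A + B₀) := by
    rintro k ℓ ⟨l, hcard, hatoms, hsuml⟩
    refine ⟨Multiset.replicate k A + l, ?_, ?_, ?_⟩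
    · rw [Multiset.card_add, Multiset.card_replicate, hcard]
    · intro T hT
      rw [Multiset.mem_add] at hT
      rcases hT with h | h
      · rw [Multiset.eq_of_mem_replicate h]; exact hAatom
      · exact hatoms T h
    · rw [Multiset.sum_add, Multiset.sum_replicate, hsuml]
  have hsubIcc : ∀ k : ℕ, ZSLengthsOn G₀ (k • A + B₀) ⊆
      Set.Icc (k - c) (k + Multiset.card B₀) := by
    intro k n hn
    obtain ⟨h1, h2⟩ := length_bound G₀ G₁ A B₀ D hA0 hAG1 huniq hD k n hn
    constructor <;> omega
  have hfin : ∀ k : ℕ, (ZSLengthsOn G₀ (k • A + B₀)).Finite :=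
    fun k => (Set.finite_Icc _ _).subset (hsubIcc k)
  refine ⟨c + Multiset.card B₀ + 1, fun k => k • A + B₀, fun k => ⟨hmemG k, hsum k, ?_, ?_⟩, ?_⟩
  · rw [show (2 : ℕ) = 1 + 1 by rfl, ← Nat.lt_iff_add_one_le]
    rw [Set.one_lt_ncard_iff (hfin k)]
    exact ⟨k + ℓ₂, k + ℓ₁, hshift k ℓ₂ hℓ₂mem, hshift k ℓ₁ hℓ₁mem, by omega⟩
  · calc (ZSLengthsOn G₀ (k • A + B₀)).ncard
        ≤ (Set.Icc (k - c) (k + Multiset.card B₀)).ncard :=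
          Set.ncard_le_ncard (hsubIcc k) (Set.finite_Icc _ _)
      _ = (Finset.Icc (k - c) (k + Multiset.card B₀)).card := by
          rw [← Finset.coe_Icc, Set.ncard_coe_finset]
      _ ≤ c + Multiset.card B₀ + 1 := by
          rw [Nat.card_Icc]
          omega
  · apply Filter.tendsto_atTop_mono _ (Filter.tendsto_sub_atTop_nat c)
    intro k
    have hne : (ZSLengthsOn G₀ (k • A + B₀)).Nonempty := ⟨k + ℓ₁, hshift k ℓ₁ hℓ₁mem⟩
    have hmem := Nat.sInf_mem hne
    exact (hsubIcc k hmem).1
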